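/- Katakernel Lemma, part 3: Let A be an additive abelian group and let Γ, Δ be two prerings of endogenies of A such that every γ ∈ Γ commutes sharply with every δ ∈ Δ. Then for any γ ∈ Γ, the subgroup γ⁻¹[Kat(Γ, Δ)] := {a ∈ A : γ[a] ⊆ Kat(Γ, Δ)} contains Kat(Γ, Δ) and is fully Δ-invariant: δ[γ⁻¹[Kat(Γ, Δ)]] ⊆ γ⁻¹[Kat(Γ, Δ)] for every δ ∈ Δ. -/

import Mathlib

open Pointwise

variable {A : Type*} [AddCommGroup A]

/-- The fibre `γ[a]` of a relation `γ ⊆ A × A` over `a`. -/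
def fib (γ : Set (A × A)) (a : A) : Set A := {b | (a, b) ∈ γ}

/-- The image `γ[S]` of a set `S ⊆ A` under a relation `γ ⊆ A × A`. -/
def eimg (γ : Set (A × A)) (S : Set A) : Set A := {b | ∃ a ∈ S, (a, b) ∈ γ}

/-- The katakernel `kat γ = γ[0]`. -/
def kat (γ : Set (A × A)) : Set A := {b | ((0 : A), b) ∈ γ}

/-- The image `im γ = γ[A]`. -/
def eim (γ : Set (A × A)) : Set A := {b | ∃ a, (a, b) ∈ γ}

/-- `γ` is (the carrier of) an additive subgroup of `A × A`. -/
def IsAddSubgroupSet (γ : Set (A × A)) : Prop :=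
  (0 : A × A) ∈ γ ∧ (∀ p ∈ γ, ∀ q ∈ γ, p + q ∈ γ) ∧ (∀ p ∈ γ, -p ∈ γ)

/-- An endogeny of `A`: an additive subgroup of `A × A` projecting onto `A`
with finite katakernel. -/
def IsEndogeny (γ : Set (A × A)) : Prop :=
  IsAddSubgroupSet γ ∧ (∀ a : A, ∃ b : A, (a, b) ∈ γ) ∧ (kat γ).Finite

/-- Pointwise sum of endogenies. -/
def esum (γ₁ γ₂ : Set (A × A)) : Set (A × A) :=
  {p | ∃ b₁ b₂ : A, (p.1, b₁) ∈ γ₁ ∧ (p.1, b₂) ∈ γ₂ ∧ p.2 = b₁ + b₂}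

/-- Pointwise negation of an endogeny. -/
def eneg (γ : Set (A × A)) : Set (A × A) := {p | (p.1, -p.2) ∈ γ}

/-- Pointwise difference of endogenies. -/
def esub (γ₁ γ₂ : Set (A × A)) : Set (A × A) := esum γ₁ (eneg γ₂)

/-- Composition of endogenies (as relations): `(a, c) ∈ γ₁ ∘ γ₂` iff
`∃ b, b ∈ γ₂[a]` and `c ∈ γ₁[b]`. -/
def ecomp (γ₁ γ₂ : Set (A × A)) : Set (A × A) :=
  {p | ∃ b : A, (p.1, b) ∈ γ₂ ∧ (b, p.2) ∈ γ₁}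

/-- Sharp commutation: `im (γ ∘ δ − δ ∘ γ) ⊆ kat γ + kat δ`. -/
def SharpCommute (γ δ : Set (A × A)) : Prop :=
  eim (esub (ecomp γ δ) (ecomp δ γ)) ⊆ kat γ + kat δ

/-- Equivalence of endogenies: they agree modulo a finite subgroup. -/
def EEquiv (γ₁ γ₂ : Set (A × A)) : Prop :=
  ∃ F : AddSubgroup A, (F : Set A).Finite ∧
    ∀ a : A, fib γ₁ a + (F : Set A) = fib γ₂ a + (F : Set A)

/-- A prering of endogenies: a set of endogenies closed under `+`, `−` and `∘`. -/
def IsPrering (Γ : Set (Set (A × A))) : Prop :=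
  (∀ γ ∈ Γ, IsEndogeny γ) ∧ (∀ γ ∈ Γ, ∀ δ ∈ Γ, esum γ δ ∈ Γ) ∧
  (∀ γ ∈ Γ, eneg γ ∈ Γ) ∧ (∀ γ ∈ Γ, ∀ δ ∈ Γ, ecomp γ δ ∈ Γ)

/-- The katakernel of a prering: the subgroup generated by all the katakernels. -/
def Kat (Γ : Set (Set (A × A))) : AddSubgroup A :=
  AddSubgroup.closure (⋃ γ ∈ Γ, kat γ)


section Aux

lemma katDiff {γ : Set (A × A)} (h : IsAddSubgroupSet γ) {a b b' : A}
    (hb : (a, b) ∈ γ) (hb' : (a, b') ∈ γ) : b - b' ∈ kat γ := by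
  have := h.2.1 (a, b) hb (-(a, b')) (h.2.2 _ hb')
  simpa [kat, Prod.ext_iff, sub_eq_add_neg] using this

lemma zero_zero_mem {γ : Set (A × A)} (h : IsAddSubgroupSet γ) : ((0 : A), (0 : A)) ∈ γ := by
  exact h.1

/-- The preimage of a subgroup `K ⊇ kat ε` under an endogeny `ε` is a subgroup. -/
def preim (ε : Set (A × A)) (K : AddSubgroup A) (hε : IsEndogeny ε)
    (h0 : kat ε ⊆ (K : Set A)) : AddSubgroup A where
  carrier := {a : A | fib ε a ⊆ (K : Set A)}
  zero_mem' := fun _ hb => h0 hb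
  add_mem' := by
    intro a a' ha ha' b hb
    obtain ⟨b₁, hb₁⟩ := hε.2.1 a
    obtain ⟨b₂, hb₂⟩ := hε.2.1 a'
    have hsum : (a + a', b₁ + b₂) ∈ ε := by
      have := hε.1.2.1 (a, b₁) hb₁ (a', b₂) hb₂
      simpa [Prod.ext_iff] using this
    have hK : b - (b₁ + b₂) ∈ K := h0 (katDiff hε.1 hb hsum)
    have hbe : b = (b - (b₁ + b₂)) + b₁ + b₂ := by abel
    show b ∈ K
    rw [hbe]
    exact K.add_mem (K.add_mem hK (ha hb₁)) (ha' hb₂)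
  neg_mem' := by
    intro a ha b hb
    obtain ⟨b₁, hb₁⟩ := hε.2.1 a
    have hneg : (-a, -b₁) ∈ ε := by
      have := hε.1.2.2 (a, b₁) hb₁
      simpa [Prod.ext_iff] using this
    have hK : b - (-b₁) ∈ K := h0 (katDiff hε.1 hb hneg)
    have hbe : b = (b - (-b₁)) + (-b₁) := by abel
    show b ∈ K
    rw [hbe]
    exact K.add_mem hK (K.neg_mem (ha hb₁))

lemma kat_subset_Kat {Γ : Set (Set (A × A))} {γ : Set (A × A)} (hγ : γ ∈ Γ) :
    kat γ ⊆ ((Kat Γ : AddSubgroup A) : Set A) :=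
  fun b hb => AddSubgroup.subset_closure (Set.mem_biUnion hγ hb)

/-- Key lemma: if an endogeny `ε` maps every generator of `K` into `K` and
`kat ε ⊆ K`, then `ε[K] ⊆ K`. -/
lemma eps_maps_K {Γ Δ : Set (Set (A × A))} (ε : Set (A × A)) (hε : IsEndogeny ε)
    (h0 : kat ε ⊆ ((Kat Γ ⊔ Kat Δ : AddSubgroup A) : Set A))
    (hgen : ∀ c ∈ (⋃ β ∈ Γ, kat β) ∪ (⋃ β ∈ Δ, kat β),
      fib ε c ⊆ ((Kat Γ ⊔ Kat Δ : AddSubgroup A) : Set A)) :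
    ∀ a ∈ (Kat Γ ⊔ Kat Δ : AddSubgroup A),
      fib ε a ⊆ ((Kat Γ ⊔ Kat Δ : AddSubgroup A) : Set A) := by
  have hKeq : (Kat Γ ⊔ Kat Δ : AddSubgroup A) =
      AddSubgroup.closure ((⋃ β ∈ Γ, kat β) ∪ (⋃ β ∈ Δ, kat β)) := by
    rw [AddSubgroup.closure_union]; rfl
  intro a ha
  rw [hKeq] at ha
  exact (AddSubgroup.closure_le (preim ε (Kat Γ ⊔ Kat Δ) hε h0)).mpr
    (fun c hc => (hgen c hc : c ∈ {a : A | fib ε a ⊆ ((Kat Γ ⊔ Kat Δ : AddSubgroup A) : Set A)})) ha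

end Aux

/-- Katakernel Lemma, part 3: for `γ ∈ Γ`, the subgroup
`γ⁻¹[Kat(Γ, Δ)]` contains `Kat(Γ, Δ)` and is fully `Δ`-invariant. -/
theorem preimage_bikat_fully_invariant (Γ Δ : Set (Set (A × A)))
    (hΓ : IsPrering Γ) (hΔ : IsPrering Δ)
    (hc : ∀ γ ∈ Γ, ∀ δ ∈ Δ, SharpCommute γ δ) (γ : Set (A × A)) (hγ : γ ∈ Γ) :
    ((Kat Γ ⊔ Kat Δ : AddSubgroup A) : Set A) ⊆
      {a : A | fib γ a ⊆ ((Kat Γ ⊔ Kat Δ : AddSubgroup A) : Set A)} ∧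
    ∀ δ ∈ Δ, eimg δ {a : A | fib γ a ⊆ ((Kat Γ ⊔ Kat Δ : AddSubgroup A) : Set A)} ⊆
      {a : A | fib γ a ⊆ ((Kat Γ ⊔ Kat Δ : AddSubgroup A) : Set A)} := by
  set K : AddSubgroup A := Kat Γ ⊔ Kat Δ with hK
  have hγE : IsEndogeny γ := hΓ.1 γ hγ
  -- the sum of the two katakernels lands in K
  have hsumK : ∀ δ ∈ Δ, kat γ + kat δ ⊆ (K : Set A) := by
    intro δ hδ x hx
    obtain ⟨u, hu, v, hv, rfl⟩ := hx
    exact K.add_mem (le_sup_left (a := Kat Γ) (kat_subset_Kat hγ hu))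
      (le_sup_right (a := Kat Γ) (kat_subset_Kat hδ hv))
  have hsumK' : ∀ β ∈ Γ, ∀ δ ∈ Δ, kat β + kat δ ⊆ (K : Set A) := by
    intro β hβ δ hδ x hx
    obtain ⟨u, hu, v, hv, rfl⟩ := hx
    exact K.add_mem (le_sup_left (a := Kat Γ) (kat_subset_Kat hβ hu))
      (le_sup_right (a := Kat Γ) (kat_subset_Kat hδ hv))
  -- γ maps K into K
  have hγK : ∀ a ∈ K, fib γ a ⊆ (K : Set A) := by
    apply eps_maps_K γ hγE (fun b hb => le_sup_left (a := Kat Γ) (kat_subset_Kat hγ hb))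
    intro c hc b hb
    rcases hc with hc | hc
    · obtain ⟨s, ⟨β, rfl⟩, hs⟩ := hc
      obtain ⟨s, ⟨hβ, rfl⟩, hcβ⟩ := hs
      have : (0, b) ∈ ecomp γ β := ⟨c, hcβ, hb⟩
      exact le_sup_left (a := Kat Γ) (kat_subset_Kat (hΓ.2.2.2 γ hγ β hβ) this)
    · obtain ⟨s, ⟨δ, rfl⟩, hs⟩ := hc
      obtain ⟨s, ⟨hδ, rfl⟩, hcδ⟩ := hs
      have h1 : ((0 : A), b) ∈ ecomp γ δ := ⟨c, hcδ, hb⟩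
      have h2 : ((0 : A), (0 : A)) ∈ ecomp δ γ :=
        ⟨0, zero_zero_mem hγE.1, zero_zero_mem (hΔ.1 δ hδ).1⟩
      have h3 : ((0 : A), b) ∈ esub (ecomp γ δ) (ecomp δ γ) :=
        ⟨b, 0, h1, by simpa only [eneg, Set.mem_setOf_eq, neg_zero] using h2, by simp⟩
      exact hsumK δ hδ (hc γ hγ δ hδ ⟨0, h3⟩)
  -- δ maps K into K, for every δ ∈ Δ
  have hδK : ∀ δ ∈ Δ, ∀ a ∈ K, fib δ a ⊆ (K : Set A) := by
    intro δ hδ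
    apply eps_maps_K δ (hΔ.1 δ hδ)
      (fun b hb => le_sup_right (a := Kat Γ) (kat_subset_Kat hδ hb))
    intro c hc b hb
    rcases hc with hc | hc
    · obtain ⟨s, ⟨β, rfl⟩, hs⟩ := hc
      obtain ⟨s, ⟨hβ, rfl⟩, hcβ⟩ := hs
      -- b ∈ kat (δ ∘ β), use sharp commutation of β with δ
      have h1 : ((0 : A), b) ∈ ecomp δ β := ⟨c, hcβ, hb⟩
      have h2 : ((0 : A), (0 : A)) ∈ ecomp β δ :=
        ⟨0, zero_zero_mem (hΔ.1 δ hδ).1, zero_zero_mem (hΓ.1 β hβ).1⟩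
      have h3 : ((0 : A), -b) ∈ esub (ecomp β δ) (ecomp δ β) :=
        ⟨0, -b, h2, by simpa only [eneg, Set.mem_setOf_eq, neg_neg] using h1, by simp⟩
      have : -b ∈ (K : Set A) := hsumK' β hβ δ hδ (hc β hβ δ hδ ⟨0, h3⟩)
      simpa using K.neg_mem this
    · obtain ⟨s, ⟨β, rfl⟩, hs⟩ := hc
      obtain ⟨s, ⟨hβ, rfl⟩, hcβ⟩ := hs
      have : (0, b) ∈ ecomp δ β := ⟨c, hcβ, hb⟩
      exact le_sup_right (a := Kat Γ) (kat_subset_Kat (hΔ.2.2.2 δ hδ β hβ) this)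
  refine ⟨fun a ha => hγK a ha, ?_⟩
  intro δ hδ b hb c hcγ
  obtain ⟨a, ha, habδ⟩ := hb
  -- c ∈ (γ ∘ δ)[a]
  have h1 : (a, c) ∈ ecomp γ δ := ⟨b, habδ, hcγ⟩
  obtain ⟨e, heγ⟩ := hγE.2.1 a
  obtain ⟨f, hfδ⟩ := (hΔ.1 δ hδ).2.1 e
  have h2 : (a, f) ∈ ecomp δ γ := ⟨e, heγ, hfδ⟩
  have h3 : (a, c - f) ∈ esub (ecomp γ δ) (ecomp δ γ) :=
    ⟨c, -f, h1, by simpa only [eneg, Set.mem_setOf_eq, neg_neg] using h2, by rw [sub_eq_add_neg]⟩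
  have hcf : c - f ∈ (K : Set A) := hsumK δ hδ (hc γ hγ δ hδ ⟨a, h3⟩)
  have heK : e ∈ K := ha heγ
  have hfK : f ∈ (K : Set A) := hδK δ hδ e heK hfδ
  have : c = (c - f) + f := by abel
  rw [Set.mem_setOf_eq] at *
  show c ∈ K
  rw [this]
  exact K.add_mem hcf hfK
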